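/- For every integer r ≥ 3, the limit as n → ∞ of ex(n, P_3, K_{r+1}) / C(n,4) exists and equals 12·((r−1)/r)^3. Equivalently, the maximum over all K_{r+1}-free graphs G on n vertices of the P_3-density d(P_3,G) tends to 12·((r−1)/r)^3 as n → ∞. -/

import Mathlib

open SimpleGraph

/-- The number of (not necessarily induced) subgraphs of `G` isomorphic to `T`. -/
noncomputable def subgraphCount {α β : Type*} (T : SimpleGraph α) (G : SimpleGraph β) : ℕ :=
  Nat.card {H : G.Subgraph // Nonempty (T ≃g H.coe)}

/-- `G` is `F`-free: it contains no subgraph isomorphic to `F`. -/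
def IsFFree {α β : Type*} (F : SimpleGraph α) (G : SimpleGraph β) : Prop :=
  ∀ H : G.Subgraph, IsEmpty (F ≃g H.coe)

/-- The generalized Turán number `ex(n, T, F)`. -/
noncomputable def genTuran (n : ℕ) {α γ : Type*} (T : SimpleGraph α) (F : SimpleGraph γ) : ℕ :=
  sSup {k | ∃ G : SimpleGraph (Fin n), IsFFree F G ∧ subgraphCount T G = k}

/-- The path with three edges on four vertices. -/
noncomputable def P3 : SimpleGraph (Fin 4) := pathGraph 4

open Finset

open scoped Classical in
private noncomputable def Qf {V : Type*} [Fintype V] (G : SimpleGraph V) (x : V → ℝ) : ℝ :=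
  ∑ v, ∑ u, (if G.Adj u v then x u * x v else 0)

open scoped Classical in
private noncomputable def dw {V : Type*} [Fintype V] (G : SimpleGraph V) (x : V → ℝ) (v : V) : ℝ :=
  ∑ u, (if G.Adj u v then x u else 0)

private lemma MS_aux {V : Type*} [Fintype V] (r : ℕ) (hr : 1 ≤ r) (G : SimpleGraph V)
    (hG : G.CliqueFree (r+1)) :
    ∀ (k : ℕ) (x : V → ℝ), (∀ v, 0 ≤ x v) →
      ((Finset.univ.filter fun v => x v ≠ 0).card ≤ k) →
      Qf G x ≤ (1 - 1/r) * (∑ v, x v)^2 := by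
  classical
  intro k
  induction k with
  | zero =>
    intro x hx hcard
    have hall : ∀ v, x v = 0 := by
      intro v
      by_contra h
      have hv : v ∈ Finset.univ.filter fun v => x v ≠ 0 := by simp [h]
      have := Finset.card_pos.mpr ⟨v, hv⟩
      omega
    have h1 : Qf G x = 0 := by
      unfold Qf
      apply Finset.sum_eq_zero; intro v _
      apply Finset.sum_eq_zero; intro u _
      rw [hall u]
      simp
    have h2 : (∑ v, x v) = 0 := by
      apply Finset.sum_eq_zero; intro v _; exact hall v
    rw [h1, h2]
    norm_num
  | succ k ih =>
    intro x hx hcard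
    set supp := Finset.univ.filter fun v => x v ≠ 0 with hsupp
    have hrpos : (0:ℝ) < r := by exact_mod_cast hr
    by_cases hclique : ∀ i ∈ supp, ∀ j ∈ supp, i ≠ j → G.Adj i j
    · -- support is a clique, so |supp| ≤ r
      have hcliq : G.IsClique ↑supp := by
        intro i hi j hj hij
        exact hclique i (by simpa using hi) j (by simpa using hj) hij
      have hsr : supp.card ≤ r := by
        by_contra h
        push_neg at h
        obtain ⟨t, hts, htc⟩ := Finset.exists_subset_card_eq (by omega : r + 1 ≤ supp.card)
        exact hG t ⟨hcliq.subset (Finset.coe_subset.mpr hts), htc⟩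
      set S := ∑ v, x v with hS
      have hSsupp : S = ∑ v ∈ supp, x v := by
        rw [hS, hsupp, Finset.sum_filter_ne_zero]
      have hCS : S^2 ≤ (r : ℝ) * ∑ v, (x v)^2 := by
        calc S^2 = (∑ v ∈ supp, x v)^2 := by rw [hSsupp]
        _ ≤ supp.card * ∑ v ∈ supp, (x v)^2 := sq_sum_le_card_mul_sum_sq
        _ ≤ (r : ℝ) * ∑ v, (x v)^2 := by
            apply mul_le_mul (by exact_mod_cast hsr)
              (Finset.sum_le_sum_of_subset_of_nonneg (Finset.subset_univ _)
                (fun i _ _ => sq_nonneg _)) (Finset.sum_nonneg fun i _ => sq_nonneg _)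
              (by positivity)
      have hQ : Qf G x ≤ S^2 - ∑ v, (x v)^2 := by
        unfold Qf
        have key : ∀ v u : V, (if G.Adj u v then x u * x v else 0)
            ≤ x u * x v - (if u = v then x u * x v else 0) := by
          intro v u
          by_cases huv : u = v
          · subst huv; simp [G.irrefl]
          · simp only [huv, if_false, sub_zero]
            by_cases h : G.Adj u v
            · simp [h]
            · simp only [h, if_false]
              exact mul_nonneg (hx u) (hx v)
        calc ∑ v, ∑ u, (if G.Adj u v then x u * x v else 0)
            ≤ ∑ v, ∑ u, (x u * x v - (if u = v then x u * x v else 0)) := by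
              apply Finset.sum_le_sum; intro v _
              apply Finset.sum_le_sum; intro u _
              exact key v u
          _ = S^2 - ∑ v, (x v)^2 := by
              have e1 : ∀ v : V, ∑ u, (x u * x v - (if u = v then x u * x v else 0))
                  = (∑ u, x u) * x v - (x v)^2 := by
                intro v
                rw [Finset.sum_sub_distrib]
                congr 1
                · rw [Finset.sum_mul]
                · rw [Finset.sum_ite_eq' Finset.univ v (fun u => x u * x v)]
                  simp [pow_two]
              rw [Finset.sum_congr rfl (fun v _ => e1 v), Finset.sum_sub_distrib,
                ← Finset.mul_sum, ← hS]
              ring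
      have h3 : S^2 / r ≤ ∑ v, (x v)^2 := by
        rw [div_le_iff₀ hrpos]
        linarith [hCS]
      have : (1 - 1/(r:ℝ)) * S^2 = S^2 - S^2/r := by ring
      rw [this]
      linarith [hQ, h3]
    · push_neg at hclique
      obtain ⟨i, hi, j, hj, hij, hnadj⟩ := hclique
      -- wlog dw x i ≤ dw x j
      have main : ∀ i j : V, i ∈ supp → j ∈ supp → i ≠ j → ¬ G.Adj i j →
          dw G x i ≤ dw G x j → Qf G x ≤ (1 - 1/r) * (∑ v, x v)^2 := by
        intro i j hi hj hij hnadj hdw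
        set x' : V → ℝ := Function.update (Function.update x i 0) j (x j + x i) with hx'
        have hx'i : x' i = 0 := by
          rw [hx']
          rw [Function.update_of_ne hij, Function.update_self]
        have hx'j : x' j = x j + x i := by
          rw [hx', Function.update_self]
        have hx'v : ∀ v, v ≠ i → v ≠ j → x' v = x v := by
          intro v hvi hvj
          rw [hx', Function.update_of_ne hvj, Function.update_of_ne hvi]
        have hxi : 0 ≤ x i := hx i
        have hxine : x i ≠ 0 := by simpa [hsupp] using hi
        have hxjne : x j ≠ 0 := by simpa [hsupp] using hj
        -- delta decomposition
        have hdelta : ∀ v, x' v = x v + ((if v = i then -x i else 0) + (if v = j then x i else 0)) := by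
          intro v
          by_cases hvi : v = i
          · subst hvi; rw [hx'i]; simp [hij]
          · by_cases hvj : v = j
            · subst hvj; rw [hx'j]; simp [hvi]; try ring
            · rw [hx'v v hvi hvj]; simp [hvi, hvj]
        have hsum : ∑ v, x' v = ∑ v, x v := by
          rw [Finset.sum_congr rfl (fun v _ => hdelta v)]
          rw [Finset.sum_add_distrib, Finset.sum_add_distrib]
          simp [Finset.sum_ite_eq']
        have hx'nonneg : ∀ v, 0 ≤ x' v := by
          intro v
          by_cases hvi : v = i
          · subst hvi; rw [hx'i]
          · by_cases hvj : v = j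
            · subst hvj; rw [hx'j]; exact add_nonneg (hx _) hxi
            · rw [hx'v v hvi hvj]; exact hx v
        have hsupp' : (Finset.univ.filter fun v => x' v ≠ 0) ⊆ supp.erase i := by
          intro v hv
          simp only [Finset.mem_filter, Finset.mem_univ, true_and] at hv
          rw [Finset.mem_erase]
          constructor
          · rintro rfl; exact hv hx'i
          · by_cases hvj : v = j
            · subst hvj; exact hj
            · by_cases hvi : v = i
              · exact absurd (hvi ▸ hx'i) hv
              · rw [hsupp]; simp only [Finset.mem_filter, Finset.mem_univ, true_and]
                rwa [hx'v v hvi hvj] at hv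
        have hcard' : (Finset.univ.filter fun v => x' v ≠ 0).card ≤ k := by
          have := Finset.card_le_card hsupp'
          rw [Finset.card_erase_of_mem hi] at this
          omega
        -- Q x ≤ Q x'
        have hQmono : Qf G x ≤ Qf G x' := by
          set δ : V → ℝ := fun v => (if v = i then -x i else 0) + (if v = j then x i else 0) with hδ
          have hδsupp : ∀ v, v ≠ i → v ≠ j → δ v = 0 := by
            intro v hvi hvj; simp [hδ, hvi, hvj]
          have hδi : δ i = -x i := by simp [hδ, Ne.symm hij, hij]
          have hδj : δ j = x i := by simp [hδ, Ne.symm hij]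
          have expand : Qf G x' = Qf G x
              + (∑ v, ∑ u, (if G.Adj u v then δ u * x v else 0))
              + (∑ v, ∑ u, (if G.Adj u v then x u * δ v else 0))
              + (∑ v, ∑ u, (if G.Adj u v then δ u * δ v else 0)) := by
            unfold Qf
            rw [← Finset.sum_add_distrib, ← Finset.sum_add_distrib, ← Finset.sum_add_distrib]
            apply Finset.sum_congr rfl; intro v _
            rw [← Finset.sum_add_distrib, ← Finset.sum_add_distrib, ← Finset.sum_add_distrib]
            apply Finset.sum_congr rfl; intro u _
            by_cases h : G.Adj u v
            · simp only [h, if_true]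
              rw [hdelta u, hdelta v]
              show (x u + δ u) * (x v + δ v) = _
              ring
            · simp [h]
          have hBδδ : (∑ v, ∑ u, (if G.Adj u v then δ u * δ v else 0)) = 0 := by
            apply Finset.sum_eq_zero; intro v _
            apply Finset.sum_eq_zero; intro u _
            by_cases h : G.Adj u v
            · simp only [h, if_true]
              have hz : δ u = 0 ∨ δ v = 0 := by
                by_cases hui : u = i
                · by_cases hvj : v = j
                  · exact absurd (by rwa [hui, hvj] at h) hnadj
                  · by_cases hvi : v = i
                    · exact absurd (hui.trans hvi.symm) (G.ne_of_adj h)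
                    · exact Or.inr (hδsupp v hvi hvj)
                · by_cases huj : u = j
                  · by_cases hvi : v = i
                    · exact absurd (G.adj_symm (by rwa [huj, hvi] at h)) hnadj
                    · by_cases hvj : v = j
                      · exact absurd (huj.trans hvj.symm) (G.ne_of_adj h)
                      · exact Or.inr (hδsupp v hvi hvj)
                  · exact Or.inl (hδsupp u hui huj)
              rcases hz with hz | hz <;> rw [hz] <;> ring
            · simp [h]
          have hB1 : (∑ v, ∑ u, (if G.Adj u v then δ u * x v else 0))
              = x i * (dw G x j - dw G x i) := by
            rw [Finset.sum_comm]
            have huu : ∀ u : V, ∑ v, (if G.Adj u v then δ u * x v else 0) = δ u * dw G x u := by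
              intro u
              rw [show dw G x u = ∑ w, (if G.Adj w u then x w else 0) from rfl, Finset.mul_sum]
              apply Finset.sum_congr rfl; intro w _
              by_cases h : G.Adj u w
              · have h' : G.Adj w u := G.adj_symm h
                simp [h, h']
              · have h' : ¬ G.Adj w u := fun hh => h (G.adj_symm hh)
                simp [h, h']
            rw [Finset.sum_congr rfl (fun u _ => huu u)]
            have hsplit : ∀ u : V, δ u * dw G x u
                = (if u = i then -x i * dw G x i else 0) + (if u = j then x i * dw G x j else 0) := by
              intro u
              by_cases hui : u = i
              · subst hui; simp [hδi, Ne.symm hij, hij]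
              · by_cases huj : u = j
                · subst huj; simp [hδj, hui]
                · simp [hδsupp u hui huj, hui, huj]
            rw [Finset.sum_congr rfl (fun u _ => hsplit u), Finset.sum_add_distrib]
            simp [Finset.sum_ite_eq']
            ring
          have hB2 : (∑ v, ∑ u, (if G.Adj u v then x u * δ v else 0))
              = x i * (dw G x j - dw G x i) := by
            have hvv : ∀ v : V, ∑ u, (if G.Adj u v then x u * δ v else 0) = δ v * dw G x v := by
              intro v
              rw [show dw G x v = ∑ u, (if G.Adj u v then x u else 0) from rfl, Finset.mul_sum]
              apply Finset.sum_congr rfl; intro u _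
              by_cases h : G.Adj u v
              · simp [h, mul_comm]
              · simp [h]
            rw [Finset.sum_congr rfl (fun v _ => hvv v)]
            have hsplit : ∀ u : V, δ u * dw G x u
                = (if u = i then -x i * dw G x i else 0) + (if u = j then x i * dw G x j else 0) := by
              intro u
              by_cases hui : u = i
              · subst hui; simp [hδi, Ne.symm hij, hij]
              · by_cases huj : u = j
                · subst huj; simp [hδj, hui]
                · simp [hδsupp u hui huj, hui, huj]
            rw [Finset.sum_congr rfl (fun u _ => hsplit u), Finset.sum_add_distrib]
            simp [Finset.sum_ite_eq']
            ring
          rw [expand, hBδδ, hB1, hB2]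
          nlinarith [mul_nonneg hxi (sub_nonneg.mpr hdw)]
        calc Qf G x ≤ Qf G x' := hQmono
          _ ≤ (1 - 1/r) * (∑ v, x' v)^2 := ih x' hx'nonneg hcard'
          _ = (1 - 1/r) * (∑ v, x v)^2 := by rw [hsum]
      rcases le_total (dw G x i) (dw G x j) with h | h
      · exact main i j hi hj hij hnadj h
      · exact main j i hj hi (Ne.symm hij) (fun h' => hnadj (G.adj_symm h')) h

open scoped Classical in
noncomputable def pathTuples {n : ℕ} (G : SimpleGraph (Fin n)) : Finset (Fin n × Fin n × Fin n × Fin n) :=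
  Finset.univ.filter fun t => G.Adj t.1 t.2.1 ∧ G.Adj t.2.1 t.2.2.1 ∧ G.Adj t.2.2.1 t.2.2.2
    ∧ t.1 ≠ t.2.2.1 ∧ t.1 ≠ t.2.2.2 ∧ t.2.1 ≠ t.2.2.2

/-- the subgraph given by a path a-b-c-d -/
def pathSub {V : Type*} (G : SimpleGraph V) (a b c d : V)
    (hab : G.Adj a b) (hbc : G.Adj b c) (hcd : G.Adj c d) : G.Subgraph where
  verts := {a, b, c, d}
  Adj x y := (x = a ∧ y = b) ∨ (x = b ∧ y = a) ∨ (x = b ∧ y = c) ∨ (x = c ∧ y = b)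
    ∨ (x = c ∧ y = d) ∨ (x = d ∧ y = c)
  adj_sub := by
    rintro x y (⟨rfl, rfl⟩ | ⟨rfl, rfl⟩ | ⟨rfl, rfl⟩ | ⟨rfl, rfl⟩ | ⟨rfl, rfl⟩ | ⟨rfl, rfl⟩)
    · exact hab
    · exact hab.symm
    · exact hbc
    · exact hbc.symm
    · exact hcd
    · exact hcd.symm
  edge_vert := by
    rintro x y (⟨rfl, rfl⟩ | ⟨rfl, rfl⟩ | ⟨rfl, rfl⟩ | ⟨rfl, rfl⟩ | ⟨rfl, rfl⟩ | ⟨rfl, rfl⟩) <;> simp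
  symm := by
    constructor
    rintro x y (⟨rfl, rfl⟩ | ⟨rfl, rfl⟩ | ⟨rfl, rfl⟩ | ⟨rfl, rfl⟩ | ⟨rfl, rfl⟩ | ⟨rfl, rfl⟩) <;> tauto

lemma pathSub_verts {V : Type*} (G : SimpleGraph V) (a b c d : V) (hab hbc hcd) :
    (pathSub G a b c d hab hbc hcd).verts = {a, b, c, d} := rfl

lemma pathSub_adj {V : Type*} (G : SimpleGraph V) (a b c d : V) (hab hbc hcd) (x y : V) :
    (pathSub G a b c d hab hbc hcd).Adj x y ↔
    ((x = a ∧ y = b) ∨ (x = b ∧ y = a) ∨ (x = b ∧ y = c) ∨ (x = c ∧ y = b)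
    ∨ (x = c ∧ y = d) ∨ (x = d ∧ y = c)) := Iff.rfl

lemma pathSub_rev {V : Type*} (G : SimpleGraph V) (a b c d : V) (hab hbc hcd) :
    pathSub G d c b a hcd.symm hbc.symm hab.symm = pathSub G a b c d hab hbc hcd := by
  apply SimpleGraph.Subgraph.ext
  · show ({d, c, b, a} : Set V) = {a, b, c, d}
    ext x; simp; tauto
  · ext x y
    rw [pathSub_adj, pathSub_adj]
    tauto

/-- the iso from P3 to the coe of pathSub -/
lemma pathSub_iso {V : Type*} (G : SimpleGraph V) (a b c d : V)
    (hab : G.Adj a b) (hbc : G.Adj b c) (hcd : G.Adj c d)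
    (hac : a ≠ c) (had : a ≠ d) (hbd : b ≠ d) :
    Nonempty (P3 ≃g (pathSub G a b c d hab hbc hcd).coe) := by
  have hab' : a ≠ b := G.ne_of_adj hab
  have hbc' : b ≠ c := G.ne_of_adj hbc
  have hcd' : c ≠ d := G.ne_of_adj hcd
  set H := pathSub G a b c d hab hbc hcd with hH
  have ha : a ∈ H.verts := by rw [hH, pathSub_verts]; simp
  have hb : b ∈ H.verts := by rw [hH, pathSub_verts]; simp
  have hc : c ∈ H.verts := by rw [hH, pathSub_verts]; simp
  have hd : d ∈ H.verts := by rw [hH, pathSub_verts]; simp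
  let f : Fin 4 → H.verts := ![⟨a, ha⟩, ⟨b, hb⟩, ⟨c, hc⟩, ⟨d, hd⟩]
  have hbij : Function.Bijective f := by
    constructor
    · intro i j hij
      fin_cases i <;> fin_cases j <;> simp_all [f, Subtype.ext_iff] <;>
        first
        | rfl
        | (exact absurd hij (by assumption))
        | (exact absurd hij.symm (by assumption))
    · rintro ⟨v, hv⟩
      rw [hH, pathSub_verts] at hv
      rcases hv with rfl | rfl | rfl | rfl
      · exact ⟨0, rfl⟩
      · exact ⟨1, rfl⟩
      · exact ⟨2, rfl⟩
      · exact ⟨3, rfl⟩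
  refine ⟨⟨Equiv.ofBijective f hbij, ?_⟩⟩
  intro i j
  show H.coe.Adj (f i) (f j) ↔ P3.Adj i j
  rw [SimpleGraph.Subgraph.coe_adj]
  fin_cases i <;> fin_cases j <;>
    simp [f, hH, pathSub_adj, P3, SimpleGraph.pathGraph_adj, hab', hbc', hcd', hac, had, hbd,
      hab'.symm, hbc'.symm, hcd'.symm, hac.symm, had.symm, hbd.symm] <;> decide

lemma subgraph_eq_pathSub {V : Type*} (G : SimpleGraph V) (H : G.Subgraph) (e : P3 ≃g H.coe) :
    ∃ (a b c d : V) (hab : G.Adj a b) (hbc : G.Adj b c) (hcd : G.Adj c d),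
      a ≠ c ∧ a ≠ d ∧ b ≠ d ∧ H = pathSub G a b c d hab hbc hcd := by
  set vs : Fin 4 → V := fun i => ↑(e i) with hvs
  have hvs_mem : ∀ i, vs i ∈ H.verts := fun i => (e i).2
  have hvs_inj : Function.Injective vs := by
    intro i j hij
    exact e.toEquiv.injective (Subtype.coe_injective hij)
  have hAdj : ∀ i j, P3.Adj i j ↔ H.Adj (vs i) (vs j) := by
    intro i j
    rw [hvs]
    simp only
    rw [← SimpleGraph.Subgraph.coe_adj]
    exact e.map_rel_iff.symm
  have hsurj : ∀ x, x ∈ H.verts → ∃ i, vs i = x := by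
    intro x hx
    obtain ⟨i, hi⟩ := e.toEquiv.surjective ⟨x, hx⟩
    exact ⟨i, congrArg Subtype.val hi⟩
  have h01 : H.Adj (vs 0) (vs 1) := (hAdj 0 1).mp (by rw [P3, SimpleGraph.pathGraph_adj]; decide)
  have h12 : H.Adj (vs 1) (vs 2) := (hAdj 1 2).mp (by rw [P3, SimpleGraph.pathGraph_adj]; decide)
  have h23 : H.Adj (vs 2) (vs 3) := (hAdj 2 3).mp (by rw [P3, SimpleGraph.pathGraph_adj]; decide)
  refine ⟨vs 0, vs 1, vs 2, vs 3, H.adj_sub h01, H.adj_sub h12, H.adj_sub h23,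
    fun h => absurd (hvs_inj h) (by decide), fun h => absurd (hvs_inj h) (by decide),
    fun h => absurd (hvs_inj h) (by decide), ?_⟩
  apply SimpleGraph.Subgraph.ext
  · rw [pathSub_verts]
    ext x
    constructor
    · intro hx
      obtain ⟨i, rfl⟩ := hsurj x hx
      fin_cases i <;> simp
    · intro hx
      simp only [Set.mem_insert_iff, Set.mem_singleton_iff] at hx
      rcases hx with rfl | rfl | rfl | rfl <;> exact hvs_mem _
  · ext x y
    rw [pathSub_adj]
    constructor
    · intro h
      obtain ⟨i, rfl⟩ := hsurj x (H.edge_vert h)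
      obtain ⟨j, rfl⟩ := hsurj y (H.edge_vert h.symm)
      have hp : P3.Adj i j := (hAdj i j).mpr h
      rw [P3, SimpleGraph.pathGraph_adj] at hp
      fin_cases i <;> fin_cases j <;>
        first
          | (exact absurd hp (by decide))
          | tauto
    · rintro (⟨rfl, rfl⟩ | ⟨rfl, rfl⟩ | ⟨rfl, rfl⟩ | ⟨rfl, rfl⟩ | ⟨rfl, rfl⟩ | ⟨rfl, rfl⟩)
      · exact h01
      · exact h01.symm
      · exact h12
      · exact h12.symm
      · exact h23
      · exact h23.symm

lemma pathSub_fiber {V : Type*} (G : SimpleGraph V) {a b c d a' b' c' d' : V}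
    {hab : G.Adj a b} {hbc : G.Adj b c} {hcd : G.Adj c d}
    {hab' : G.Adj a' b'} {hbc' : G.Adj b' c'} {hcd' : G.Adj c' d'}
    (hac : a ≠ c) (had : a ≠ d) (hbd : b ≠ d)
    (hac' : a' ≠ c') (had' : a' ≠ d') (hbd' : b' ≠ d')
    (heq : pathSub G a' b' c' d' hab' hbc' hcd' = pathSub G a b c d hab hbc hcd) :
    (a' = a ∧ b' = b ∧ c' = c ∧ d' = d) ∨ (a' = d ∧ b' = c ∧ c' = b ∧ d' = a) := by
  have nab : a ≠ b := G.ne_of_adj hab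
  have nbc : b ≠ c := G.ne_of_adj hbc
  have ncd : c ≠ d := G.ne_of_adj hcd
  have nab' : a' ≠ b' := G.ne_of_adj hab'
  have nbc' : b' ≠ c' := G.ne_of_adj hbc'
  have ncd' : c' ≠ d' := G.ne_of_adj hcd'
  have h1 : (pathSub G a b c d hab hbc hcd).Adj a' b' := by
    rw [← heq]; exact Or.inl ⟨rfl, rfl⟩
  have h2 : (pathSub G a b c d hab hbc hcd).Adj b' c' := by
    rw [← heq]; exact Or.inr (Or.inr (Or.inl ⟨rfl, rfl⟩))
  have h3 : (pathSub G a b c d hab hbc hcd).Adj c' d' := by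
    rw [← heq]; exact Or.inr (Or.inr (Or.inr (Or.inr (Or.inl ⟨rfl, rfl⟩))))
  rw [pathSub_adj] at h1 h2 h3
  rcases h1 with ⟨rfl, rfl⟩ | ⟨rfl, rfl⟩ | ⟨rfl, rfl⟩ | ⟨rfl, rfl⟩ | ⟨rfl, rfl⟩ | ⟨rfl, rfl⟩ <;>
    rcases h2 with ⟨e1, rfl⟩ | ⟨e1, rfl⟩ | ⟨e1, rfl⟩ | ⟨e1, rfl⟩ | ⟨e1, rfl⟩ | ⟨e1, rfl⟩ <;>
      rcases h3 with ⟨e2, rfl⟩ | ⟨e2, rfl⟩ | ⟨e2, rfl⟩ | ⟨e2, rfl⟩ | ⟨e2, rfl⟩ | ⟨e2, rfl⟩ <;>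
        simp_all

lemma mem_pathTuples {n : ℕ} {G : SimpleGraph (Fin n)} {t : Fin n × Fin n × Fin n × Fin n} :
    t ∈ pathTuples G ↔ G.Adj t.1 t.2.1 ∧ G.Adj t.2.1 t.2.2.1 ∧ G.Adj t.2.2.1 t.2.2.2
    ∧ t.1 ≠ t.2.2.1 ∧ t.1 ≠ t.2.2.2 ∧ t.2.1 ≠ t.2.2.2 := by
  classical
  simp [pathTuples]

lemma card_pathTuples_eq {n : ℕ} (G : SimpleGraph (Fin n)) :
    (pathTuples G).card = 2 * subgraphCount P3 G := by
  classical
  set Sub := {H : G.Subgraph // Nonempty (P3 ≃g H.coe)} with hSub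
  set F : {t // t ∈ pathTuples G} → Sub × Bool := fun t =>
    (⟨pathSub G t.1.1 t.1.2.1 t.1.2.2.1 t.1.2.2.2
        (mem_pathTuples.mp t.2).1 (mem_pathTuples.mp t.2).2.1 (mem_pathTuples.mp t.2).2.2.1,
      pathSub_iso G _ _ _ _ _ _ _ (mem_pathTuples.mp t.2).2.2.2.1
        (mem_pathTuples.mp t.2).2.2.2.2.1 (mem_pathTuples.mp t.2).2.2.2.2.2⟩,
      decide (t.1.1 < t.1.2.2.2)) with hF
  have hinj : Function.Injective F := by
    rintro ⟨⟨a, b, c, d⟩, ht⟩ ⟨⟨a', b', c', d'⟩, ht'⟩ h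
    obtain ⟨m1, m2, m3, m4, m5, m6⟩ := mem_pathTuples.mp ht
    obtain ⟨m1', m2', m3', m4', m5', m6'⟩ := mem_pathTuples.mp ht'
    rw [hF, Prod.mk.injEq, Subtype.mk.injEq] at h
    obtain ⟨hsub, hbool⟩ := h
    rcases pathSub_fiber G m4 m5 m6 m4' m5' m6' hsub.symm with
      ⟨rfl, rfl, rfl, rfl⟩ | ⟨h1, h2, h3, h4⟩
    · rfl
    · exfalso
      subst h1; subst h2; subst h3; subst h4
      simp only [decide_eq_decide] at hbool
      rcases lt_or_gt_of_ne m5 with hlt | hlt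
      · exact absurd (hbool.mp hlt) (lt_asymm hlt)
      · exact absurd (hbool.mpr hlt) (lt_asymm hlt)
  have hsurj : Function.Surjective F := by
    rintro ⟨⟨H, hne⟩, bl⟩
    obtain ⟨a, b, c, d, hab, hbc, hcd, hac, had, hbd, rfl⟩ :=
      subgraph_eq_pathSub G H hne.some
    have hmem : (a, b, c, d) ∈ pathTuples G := mem_pathTuples.mpr ⟨hab, hbc, hcd, hac, had, hbd⟩
    have hmem' : (d, c, b, a) ∈ pathTuples G :=
      mem_pathTuples.mpr ⟨hcd.symm, hbc.symm, hab.symm, hbd.symm, had.symm, hac.symm⟩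
    by_cases hbl : decide (a < d) = bl
    · refine ⟨⟨(a, b, c, d), hmem⟩, ?_⟩
      rw [hF]
      refine Prod.ext (Subtype.ext ?_) hbl
      rfl
    · refine ⟨⟨(d, c, b, a), hmem'⟩, ?_⟩
      rw [hF]
      refine Prod.ext (Subtype.ext ?_) ?_
      · exact pathSub_rev G a b c d hab hbc hcd
      · show decide (d < a) = bl
        rcases lt_or_gt_of_ne had with hlt | hlt
        · have h1 : decide (a < d) = true := by simpa using hlt
          have h2 : decide (d < a) = false := by simp [lt_asymm hlt]
          rw [h1] at hbl
          rw [h2]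
          cases bl
          · rfl
          · exact absurd rfl hbl
        · have h1 : decide (a < d) = false := by simp [lt_asymm hlt]
          have h2 : decide (d < a) = true := by simpa using hlt
          rw [h1] at hbl
          rw [h2]
          cases bl
          · exact absurd rfl hbl
          · rfl
  have hcard := Nat.card_congr (Equiv.ofBijective F ⟨hinj, hsurj⟩)
  rw [Nat.card_eq_finsetCard] at hcard
  have hB : Nat.card Bool = 2 := Nat.card_eq_fintype_card.trans (by simp)
  calc (pathTuples G).card = Nat.card (Sub × Bool) := hcard
    _ = Nat.card Sub * Nat.card Bool := Nat.card_prod _ _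
    _ = Nat.card Sub * 2 := by rw [hB]
    _ = 2 * subgraphCount P3 G := by unfold subgraphCount; exact mul_comm _ _
section Walks
variable {n : ℕ}

open scoped Classical in
noncomputable def walkTuples (G : SimpleGraph (Fin n)) : Finset (Fin n × Fin n × Fin n × Fin n) :=
  Finset.univ.filter fun t => G.Adj t.1 t.2.1 ∧ G.Adj t.2.1 t.2.2.1 ∧ G.Adj t.2.2.1 t.2.2.2

open scoped Classical in
lemma walkTuples_card (G : SimpleGraph (Fin n)) :
    ((walkTuples G).card : ℝ) = Qf G (dw G (fun _ => 1)) := by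
  classical
  have lhs : ((walkTuples G).card : ℝ)
      = ∑ b, ∑ c, (if G.Adj b c then (1:ℝ) else 0) *
          ((∑ a, if G.Adj a b then (1:ℝ) else 0) * (∑ d, if G.Adj d c then (1:ℝ) else 0)) := by
    rw [walkTuples, Finset.card_filter]
    push_cast
    rw [Fintype.sum_prod_type]
    have step1 : ∀ a : Fin n, (∑ t : Fin n × Fin n × Fin n,
        if G.Adj a t.1 ∧ G.Adj t.1 t.2.1 ∧ G.Adj t.2.1 t.2.2 then (1:ℝ) else 0)
        = ∑ b, ∑ c, ((if G.Adj a b then (1:ℝ) else 0) *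
            ((if G.Adj b c then (1:ℝ) else 0) * (∑ d, if G.Adj d c then (1:ℝ) else 0))) := by
      intro a
      rw [Fintype.sum_prod_type]
      apply Finset.sum_congr rfl; intro b _
      rw [Fintype.sum_prod_type]
      apply Finset.sum_congr rfl; intro c _
      rw [Finset.mul_sum, Finset.mul_sum]
      apply Finset.sum_congr rfl; intro d _
      have hcomm : G.Adj c d ↔ G.Adj d c := G.adj_comm c d
      by_cases h1 : G.Adj a b <;> by_cases h2 : G.Adj b c <;> by_cases h3 : G.Adj c d <;>
        simp [h1, h2, h3, hcomm.symm, ← hcomm]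
    rw [Finset.sum_congr rfl (fun a _ => step1 a)]
    rw [Finset.sum_comm]
    apply Finset.sum_congr rfl; intro b _
    rw [Finset.sum_comm]
    apply Finset.sum_congr rfl; intro c _
    rw [← Finset.sum_mul]
    ring
  rw [lhs]
  rw [show Qf G (dw G (fun _ => 1)) = ∑ v, ∑ u,
    (if G.Adj u v then dw G (fun _ => 1) u * dw G (fun _ => 1) v else 0) from rfl]
  rw [Finset.sum_comm]
  apply Finset.sum_congr rfl; intro u _
  apply Finset.sum_congr rfl; intro v _
  rw [show dw G (fun _ => 1) u = ∑ a, (if G.Adj a u then (1:ℝ) else 0) from rfl,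
    show dw G (fun _ => 1) v = ∑ d, (if G.Adj d v then (1:ℝ) else 0) from rfl]
  by_cases h : G.Adj u v <;> simp [h]

open scoped Classical in
lemma sum_dw_one (G : SimpleGraph (Fin n)) :
    ∑ v, dw G (fun _ => 1) v = Qf G (fun _ => 1) := by
  rw [show Qf G (fun _ => 1) = ∑ v, ∑ u, (if G.Adj u v then (1:ℝ) * 1 else 0) from rfl]
  apply Finset.sum_congr rfl; intro v _
  rw [show dw G (fun _ => 1) v = ∑ u, (if G.Adj u v then (1:ℝ) else 0) from rfl]
  simp

lemma dw_one_nonneg (G : SimpleGraph (Fin n)) (v : Fin n) : 0 ≤ dw G (fun _ => 1) v := by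
  classical
  rw [show dw G (fun _ => 1) v = ∑ u, (if G.Adj u v then (1:ℝ) else 0) from rfl]
  apply Finset.sum_nonneg; intro u _
  by_cases h : G.Adj u v <;> simp [h]

lemma pathTuples_subset (G : SimpleGraph (Fin n)) : pathTuples G ⊆ walkTuples G := by
  classical
  intro t ht
  rw [mem_pathTuples] at ht
  rw [walkTuples, Finset.mem_filter]
  exact ⟨Finset.mem_univ _, ht.1, ht.2.1, ht.2.2.1⟩

open scoped Classical in
lemma walkTuples_le (G : SimpleGraph (Fin n)) :
    (walkTuples G).card ≤ (pathTuples G).card + 3 * n^3 := by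
  classical
  set B1 : Finset (Fin n × Fin n × Fin n × Fin n) :=
    Finset.univ.filter fun t => t.1 = t.2.2.1 with hB1
  set B2 : Finset (Fin n × Fin n × Fin n × Fin n) :=
    Finset.univ.filter fun t => t.1 = t.2.2.2 with hB2
  set B3 : Finset (Fin n × Fin n × Fin n × Fin n) :=
    Finset.univ.filter fun t => t.2.1 = t.2.2.2 with hB3
  have hsub : walkTuples G ⊆ pathTuples G ∪ B1 ∪ B2 ∪ B3 := by
    intro t ht
    rw [walkTuples, Finset.mem_filter] at ht
    simp only [Finset.mem_union]
    by_cases h1 : t.1 = t.2.2.1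
    · exact Or.inl (Or.inl (Or.inr (by rw [hB1]; simp [h1])))
    · by_cases h2 : t.1 = t.2.2.2
      · exact Or.inl (Or.inr (by rw [hB2]; simp [h2]))
      · by_cases h3 : t.2.1 = t.2.2.2
        · exact Or.inr (by rw [hB3]; simp [h3])
        · exact Or.inl (Or.inl (Or.inl (mem_pathTuples.mpr ⟨ht.2.1, ht.2.2.1, ht.2.2.2, h1, h2, h3⟩)))
  have hcube : (Finset.univ : Finset (Fin n × Fin n × Fin n)).card = n^3 := by
    simp [Finset.card_univ]; ring
  have hc1 : B1.card ≤ n^3 := by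
    rw [← hcube]
    apply Finset.card_le_card_of_injOn (fun t => (t.2.1, t.2.2.1, t.2.2.2))
      (fun t _ => Finset.mem_univ _)
    rintro ⟨a, b, c, d⟩ ht ⟨a', b', c', d'⟩ ht' h
    simp only [hB1, Finset.coe_filter, Set.mem_setOf_eq] at ht ht'
    simp only [Prod.mk.injEq] at h ⊢
    exact ⟨ht.2.trans (h.2.1.symm ▸ ht'.2.symm), h⟩
  have hc2 : B2.card ≤ n^3 := by
    rw [← hcube]
    apply Finset.card_le_card_of_injOn (fun t => (t.2.1, t.2.2.1, t.2.2.2))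
      (fun t _ => Finset.mem_univ _)
    rintro ⟨a, b, c, d⟩ ht ⟨a', b', c', d'⟩ ht' h
    simp only [hB2, Finset.coe_filter, Set.mem_setOf_eq] at ht ht'
    simp only [Prod.mk.injEq] at h ⊢
    exact ⟨ht.2.trans (h.2.2.symm ▸ ht'.2.symm), h⟩
  have hc3 : B3.card ≤ n^3 := by
    rw [← hcube]
    apply Finset.card_le_card_of_injOn (fun t => (t.1, t.2.2.1, t.2.2.2))
      (fun t _ => Finset.mem_univ _)
    rintro ⟨a, b, c, d⟩ ht ⟨a', b', c', d'⟩ ht' h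
    simp only [hB3, Finset.coe_filter, Set.mem_setOf_eq] at ht ht'
    simp only [Prod.mk.injEq] at h ⊢
    exact ⟨h.1, ht.2.trans (h.2.2.symm ▸ ht'.2.symm), h.2⟩
  have := Finset.card_le_card hsub
  have h4 := Finset.card_union_le (pathTuples G ∪ B1 ∪ B2) B3
  have h5 := Finset.card_union_le (pathTuples G ∪ B1) B2
  have h6 := Finset.card_union_le (pathTuples G) B1
  omega
end Walks
section Bounds
variable {n r : ℕ}

lemma MS {V : Type*} [Fintype V] (hr : 1 ≤ r) (G : SimpleGraph V) (hG : G.CliqueFree (r+1))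
    (x : V → ℝ) (hx : ∀ v, 0 ≤ x v) : Qf G x ≤ (1 - 1/r) * (∑ v, x v)^2 :=
  MS_aux r hr G hG _ x hx le_rfl

lemma sub_div_nonneg (hr : 1 ≤ r) : (0:ℝ) ≤ 1 - 1/r := by
  have : (1:ℝ) ≤ r := by exact_mod_cast hr
  have h0 : (0:ℝ) < r := by linarith
  rw [sub_nonneg, div_le_one h0]
  linarith

lemma pathTuples_card_upper (G : SimpleGraph (Fin n)) (hr : 1 ≤ r) (hG : G.CliqueFree (r+1)) :
    ((pathTuples G).card : ℝ) ≤ (1 - 1/r)^3 * n^4 := by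
  classical
  have h1 : ((pathTuples G).card : ℝ) ≤ ((walkTuples G).card : ℝ) := by
    exact_mod_cast Finset.card_le_card (pathTuples_subset G)
  rw [walkTuples_card] at h1
  have h2 : Qf G (dw G (fun _ => 1)) ≤ (1 - 1/r) * (∑ v, dw G (fun _ => 1) v)^2 :=
    MS hr G hG _ (dw_one_nonneg G)
  rw [sum_dw_one] at h2
  have h4 : Qf G (fun _ => 1) ≤ (1 - 1/r) * (n:ℝ)^2 := by
    have h := MS hr G hG (fun _ => 1) (fun _ => zero_le_one)
    have : (∑ _v : Fin n, (1:ℝ)) = n := by simp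
    rwa [this] at h
  have h5 : 0 ≤ Qf G (fun _ => 1) := by
    rw [← sum_dw_one]
    exact Finset.sum_nonneg fun v _ => dw_one_nonneg G v
  have h6 := sub_div_nonneg hr
  calc ((pathTuples G).card : ℝ) ≤ Qf G (dw G (fun _ => 1)) := h1
    _ ≤ (1 - 1/r) * (Qf G (fun _ => 1))^2 := h2
    _ ≤ (1 - 1/r) * ((1 - 1/r) * (n:ℝ)^2)^2 := by
        apply mul_le_mul_of_nonneg_left _ h6
        exact pow_le_pow_left₀ h5 h4 2
    _ = (1 - 1/r)^3 * (n:ℝ)^4 := by ring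

/-- the r-partite Turán-type graph on Fin n -/
def GT (n r : ℕ) : SimpleGraph (Fin n) where
  Adj u v := (u : ℕ) % r ≠ (v : ℕ) % r
  symm := ⟨fun u v h => Ne.symm h⟩
  loopless := ⟨fun u h => h rfl⟩

lemma GT_free (hr : 1 ≤ r) : IsFFree (⊤ : SimpleGraph (Fin (r+1))) (GT n r) := by
  intro H
  constructor
  intro e
  have hrpos : 0 < r := hr
  let f : Fin (r+1) → Fin r := fun i => ⟨((e i : Fin n) : ℕ) % r, Nat.mod_lt _ hrpos⟩
  have hinj : Function.Injective f := by
    intro i j hij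
    by_contra hne
    have hadj : (⊤ : SimpleGraph (Fin (r+1))).Adj i j := by simp [hne]
    have h2 : H.coe.Adj (e i) (e j) := e.map_rel_iff.mpr hadj
    rw [SimpleGraph.Subgraph.coe_adj] at h2
    have h3 := H.adj_sub h2
    exact h3 (congrArg Fin.val hij)
  have := Fintype.card_le_of_injective f hinj
  simp at this

lemma bot_free {m : ℕ} (hr : 1 ≤ r) : IsFFree (⊤ : SimpleGraph (Fin (r+1))) (⊥ : SimpleGraph (Fin m)) := by
  intro H
  constructor
  intro e
  have h01 : (0 : Fin (r+1)) ≠ 1 := by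
    intro h
    have h' := congrArg Fin.val h
    rw [Fin.val_zero, Fin.val_one', Nat.mod_eq_of_lt (by omega)] at h'
    exact absurd h' (by omega)
  have hadj : (⊤ : SimpleGraph (Fin (r+1))).Adj 0 1 := by simp [h01]
  have h2 := e.map_rel_iff.mpr hadj
  rw [SimpleGraph.Subgraph.coe_adj] at h2
  exact (H.adj_sub h2).elim

lemma isffree_cliqueFree (G : SimpleGraph (Fin n)) (h : IsFFree (⊤ : SimpleGraph (Fin (r+1))) G) :
    G.CliqueFree (r+1) := by
  classical
  intro s hs
  set H : G.Subgraph := {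
    verts := ↑s
    Adj := fun x y => x ∈ s ∧ y ∈ s ∧ x ≠ y
    adj_sub := fun ⟨hx, hy, hne⟩ => hs.1 hx hy hne
    edge_vert := fun ⟨hx, _, _⟩ => hx
    symm := ⟨fun x y ⟨hx, hy, hne⟩ => ⟨hy, hx, hne.symm⟩⟩ } with hH
  have hcard : s.card = r+1 := hs.2
  let e0 : {x // x ∈ s} ≃ Fin (r+1) := (s.equivFin).trans (finCongr hcard)
  let e1 : Fin (r+1) ≃ H.verts := e0.symm.trans (Equiv.subtypeEquivRight (fun x => by
    rw [hH]; exact Iff.rfl))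
  refine (h H).false ⟨e1, ?_⟩
  intro i j
  rw [SimpleGraph.Subgraph.coe_adj]
  simp only [SimpleGraph.top_adj]
  constructor
  · rintro ⟨_, _, hne⟩
    exact fun hij => hne (by rw [hij])
  · intro hij
    refine ⟨(e1 i).2, (e1 j).2, ?_⟩
    exact fun hval => hij (e1.injective (Subtype.coe_injective hval))
end Bounds
section LowerB
variable {n r : ℕ}

open scoped Classical in
lemma GT_dw_lower (hr : 1 ≤ r) (v : Fin n) :
    (n:ℝ) - (n:ℝ)/r - 1 ≤ dw (GT n r) (fun _ => 1) v := by
  classical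
  have hdw : dw (GT n r) (fun _ => 1) v
      = ((Finset.univ.filter fun u : Fin n => (GT n r).Adj u v).card : ℝ) := by
    rw [show dw (GT n r) (fun _ => 1) v = ∑ u, (if (GT n r).Adj u v then (1:ℝ) else 0) from rfl]
    rw [Finset.sum_boole]
  set A := Finset.univ.filter fun u : Fin n => (u:ℕ) % r = (v:ℕ) % r with hA
  have hcompl : (Finset.univ.filter fun u : Fin n => (GT n r).Adj u v).card = n - A.card := by
    have h1 : (Finset.univ.filter fun u : Fin n => ¬ (GT n r).Adj u v) = A := by
      ext u
      simp only [Finset.mem_filter, Finset.mem_univ, true_and, hA]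
      show ¬¬((u:ℕ) % r = (v:ℕ) % r) ↔ _
      rw [not_not]
    have h2 := Finset.card_filter_add_card_filter_not
      (s := (Finset.univ : Finset (Fin n))) (p := fun u : Fin n => (GT n r).Adj u v)
    rw [h1] at h2
    rw [Finset.card_univ] at h2
    simp only [Fintype.card_fin] at h2
    omega
  have hAle : A.card ≤ n / r + 1 := by
    have : A.card ≤ (Finset.range (n/r + 1)).card := by
      refine Finset.card_le_card_of_injOn (fun u : Fin n => (u:ℕ) / r) ?_ ?_
      · intro u _
        rw [Finset.mem_coe, Finset.mem_range]
        show (u:ℕ)/r < n/r + 1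
        have : (u:ℕ)/r ≤ n/r := Nat.div_le_div_right (le_of_lt u.isLt)
        omega
      · intro u hu u' hu' h
        have h' : (u:ℕ)/r = (u':ℕ)/r := h
        simp only [Finset.mem_coe, hA, Finset.mem_filter] at hu hu'
        apply Fin.val_injective
        have e1 := Nat.div_add_mod (u:ℕ) r
        have e2 := Nat.div_add_mod (u':ℕ) r
        rw [← e1, ← e2, h', hu.2, hu'.2]
      
    rwa [Finset.card_range] at this
  rw [hdw, hcompl]
  have hcast : ((n - A.card : ℕ) : ℝ) = (n:ℝ) - A.card := by
    have : A.card ≤ n := le_trans (Finset.card_le_card (Finset.filter_subset _ _)) (by simp)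
    exact Nat.cast_sub this
  rw [hcast]
  have h3 : ((A.card : ℕ) : ℝ) ≤ ((n/r : ℕ) : ℝ) + 1 := by exact_mod_cast hAle
  have h4 : ((n/r : ℕ) : ℝ) ≤ (n:ℝ)/r := Nat.cast_div_le
  linarith

open scoped Classical in
lemma GT_card_lower (hr : 1 ≤ r) (hD : 0 ≤ (n:ℝ) - (n:ℝ)/r - 1) :
    (n:ℝ) * ((n:ℝ) - (n:ℝ)/r - 1)^3 - 3*(n:ℝ)^3 ≤ ((pathTuples (GT n r)).card : ℝ) := by
  classical
  set D := (n:ℝ) - (n:ℝ)/r - 1 with hDdef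
  have hwalk := walkTuples_le (GT n r)
  have hwalkR : ((walkTuples (GT n r)).card : ℝ)
      ≤ ((pathTuples (GT n r)).card : ℝ) + 3*(n:ℝ)^3 := by
    exact_mod_cast hwalk
  suffices hsuff : (n:ℝ) * D^3 ≤ ((walkTuples (GT n r)).card : ℝ) by linarith
  rw [walkTuples_card]
  have hterm : ∀ v u : Fin n, (if (GT n r).Adj u v then D * D else 0)
      ≤ (if (GT n r).Adj u v then dw (GT n r) (fun _ => 1) u * dw (GT n r) (fun _ => 1) v else 0) := by
    intro v u
    by_cases h : (GT n r).Adj u v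
    · simp only [h, if_true]
      exact mul_le_mul (GT_dw_lower hr u) (GT_dw_lower hr v) hD (dw_one_nonneg _ u)
    · simp [h]
  have hQ1 : D * D * Qf (GT n r) (fun _ => 1) ≤ Qf (GT n r) (dw (GT n r) (fun _ => 1)) := by
    rw [show Qf (GT n r) (dw (GT n r) (fun _ => 1)) = ∑ v, ∑ u,
      (if (GT n r).Adj u v then dw (GT n r) (fun _ => 1) u * dw (GT n r) (fun _ => 1) v else 0) from rfl]
    rw [show Qf (GT n r) (fun _ => 1) = ∑ v, ∑ u,
      (if (GT n r).Adj u v then (1:ℝ)*1 else 0) from rfl]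
    rw [Finset.mul_sum]
    apply Finset.sum_le_sum
    intro v _
    rw [Finset.mul_sum]
    apply Finset.sum_le_sum
    intro u _
    refine le_trans (le_of_eq ?_) (hterm v u)
    by_cases h : (GT n r).Adj u v <;> simp [h]
  have hQ2 : (n:ℝ) * D ≤ Qf (GT n r) (fun _ => 1) := by
    rw [← sum_dw_one]
    calc (n:ℝ) * D = (Fintype.card (Fin n) : ℝ) * D := by rw [Fintype.card_fin]
      _ = ∑ _v : Fin n, D := by rw [Finset.sum_const, Finset.card_univ, nsmul_eq_mul]
      _ ≤ ∑ v, dw (GT n r) (fun _ => 1) v := Finset.sum_le_sum fun v _ => GT_dw_lower hr v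
  have hD2 : 0 ≤ D * D := mul_self_nonneg D
  have hQf1 : 0 ≤ Qf (GT n r) (fun _ => 1) := by
    rw [← sum_dw_one]
    exact Finset.sum_nonneg fun v _ => dw_one_nonneg _ v
  calc (n:ℝ) * D^3 = D * D * ((n:ℝ) * D) := by ring
    _ ≤ D * D * Qf (GT n r) (fun _ => 1) := mul_le_mul_of_nonneg_left hQ2 hD2
    _ ≤ Qf (GT n r) (dw (GT n r) (fun _ => 1)) := hQ1

lemma subgraphCount_le_pow (G : SimpleGraph (Fin n)) : subgraphCount P3 G ≤ n^4 := by
  have h := card_pathTuples_eq G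
  have h2 : (pathTuples G).card ≤ n^4 := by
    calc (pathTuples G).card ≤ (Finset.univ : Finset (Fin n × Fin n × Fin n × Fin n)).card :=
        Finset.card_le_univ _
      _ = n^4 := by simp [Finset.card_univ]; ring
  omega

lemma genTuran_bddAbove :
    BddAbove {k | ∃ G : SimpleGraph (Fin n), IsFFree (⊤ : SimpleGraph (Fin (r+1))) G
      ∧ subgraphCount P3 G = k} := by
  refine ⟨n^4, ?_⟩
  rintro k ⟨G, _, rfl⟩
  exact subgraphCount_le_pow G

lemma genTuran_nonempty (hr : 1 ≤ r) :
    {k | ∃ G : SimpleGraph (Fin n), IsFFree (⊤ : SimpleGraph (Fin (r+1))) G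
      ∧ subgraphCount P3 G = k}.Nonempty :=
  ⟨_, ⊥, bot_free hr, rfl⟩

lemma genTuran_lower (hr : 1 ≤ r) :
    subgraphCount P3 (GT n r) ≤ genTuran n P3 (⊤ : SimpleGraph (Fin (r+1))) :=
  le_csSup genTuran_bddAbove ⟨GT n r, GT_free hr, rfl⟩

lemma genTuran_upper (hr : 1 ≤ r) :
    2 * (genTuran n P3 (⊤ : SimpleGraph (Fin (r+1))) : ℝ) ≤ (1 - 1/r)^3 * n^4 := by
  obtain ⟨G₀, hfree, hcount⟩ := Nat.sSup_mem (genTuran_nonempty hr) (genTuran_bddAbove (n := n))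
  rw [genTuran, ← hcount]
  have h := pathTuples_card_upper G₀ hr (isffree_cliqueFree G₀ hfree)
  rw [card_pathTuples_eq] at h
  calc 2 * (subgraphCount P3 G₀ : ℝ) = ((2 * subgraphCount P3 G₀ : ℕ) : ℝ) := by push_cast; ring
    _ ≤ (1 - 1/r)^3 * n^4 := h

lemma genTuran_lower_real (hr : 1 ≤ r) (hD : 0 ≤ (n:ℝ) - (n:ℝ)/r - 1) :
    (n:ℝ) * ((n:ℝ) - (n:ℝ)/r - 1)^3 - 3*(n:ℝ)^3
      ≤ 2 * (genTuran n P3 (⊤ : SimpleGraph (Fin (r+1))) : ℝ) := by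
  have h1 := GT_card_lower hr hD
  rw [card_pathTuples_eq] at h1
  have h2 : (2 * subgraphCount P3 (GT n r) : ℝ) ≤ 2 * (genTuran n P3 (⊤ : SimpleGraph (Fin (r+1))) : ℝ) := by
    have := genTuran_lower (n := n) hr
    have : (subgraphCount P3 (GT n r) : ℝ) ≤ (genTuran n P3 (⊤ : SimpleGraph (Fin (r+1))) : ℝ) := by
      exact_mod_cast this
    linarith
  calc (n:ℝ) * ((n:ℝ) - (n:ℝ)/r - 1)^3 - 3*(n:ℝ)^3
      ≤ ((2 * subgraphCount P3 (GT n r) : ℕ) : ℝ) := h1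
    _ = 2 * (subgraphCount P3 (GT n r) : ℝ) := by push_cast; ring
    _ ≤ _ := h2
end LowerB
section Limit

lemma choose_four_cast (n : ℕ) (h : 4 ≤ n) :
    ((n.choose 4 : ℕ) : ℝ) = (n:ℝ)*((n:ℝ)-1)*((n:ℝ)-2)*((n:ℝ)-3)/24 := by
  have h24 : 24 * n.choose 4 = n.descFactorial 4 := by
    rw [Nat.descFactorial_eq_factorial_mul_choose n 4]; norm_num [Nat.factorial]
  have hd : n.descFactorial 4 = (n-3)*((n-2)*((n-1)*n)) := by simp [Nat.descFactorial]
  have h1 : (1:ℕ) ≤ n := by omega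
  have h2 : (2:ℕ) ≤ n := by omega
  have h3 : (3:ℕ) ≤ n := by omega
  have hcast : ((n.descFactorial 4 : ℕ) : ℝ) = ((n:ℝ)-3)*(((n:ℝ)-2)*(((n:ℝ)-1)*n)) := by
    rw [hd]; push_cast [h1, h2, h3]; ring
  have hc := congrArg (fun k : ℕ => (k : ℝ)) h24
  simp only [Nat.cast_mul, Nat.cast_ofNat] at hc
  rw [hcast] at hc
  linarith

theorem P3_density_limit (r : ℕ) (hr : 3 ≤ r) :
    Filter.Tendsto
      (fun n : ℕ =>
        (genTuran n P3 (⊤ : SimpleGraph (Fin (r + 1))) : ℝ) / (n.choose 4))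
      Filter.atTop (nhds (12 * (((r : ℝ) - 1) / r) ^ 3)) := by
  have hr1 : 1 ≤ r := by omega
  have hr0 : (0:ℝ) < r := by
    have : (3:ℝ) ≤ r := by exact_mod_cast hr
    linarith
  set K : ℝ := 1 - 1/r with hK
  have hKr : ((r:ℝ) - 1)/r = K := by
    rw [hK]; field_simp
  set q : ℕ → ℝ := fun n => (1 - 1/(n:ℝ)) * (1 - 2/(n:ℝ)) * (1 - 3/(n:ℝ)) with hq
  set U : ℕ → ℝ := fun n => 12 * K^3 / q n with hU
  set Lo : ℕ → ℝ := fun n => 12 * ((K - 1/(n:ℝ))^3 - 3/(n:ℝ)) / q n with hLo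
  have h1n : Filter.Tendsto (fun n : ℕ => (1:ℝ)/(n:ℝ)) Filter.atTop (nhds 0) :=
    tendsto_const_div_atTop_nhds_zero_nat 1
  have h2n : Filter.Tendsto (fun n : ℕ => (2:ℝ)/(n:ℝ)) Filter.atTop (nhds 0) :=
    tendsto_const_div_atTop_nhds_zero_nat 2
  have h3n : Filter.Tendsto (fun n : ℕ => (3:ℝ)/(n:ℝ)) Filter.atTop (nhds 0) :=
    tendsto_const_div_atTop_nhds_zero_nat 3
  have e1 : Filter.Tendsto (fun n : ℕ => 1 - 1/(n:ℝ)) Filter.atTop (nhds 1) := by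
    simpa using (tendsto_const_nhds (x := (1:ℝ)) (f := Filter.atTop (α := ℕ))).sub h1n
  have e2 : Filter.Tendsto (fun n : ℕ => 1 - 2/(n:ℝ)) Filter.atTop (nhds 1) := by
    simpa using (tendsto_const_nhds (x := (1:ℝ)) (f := Filter.atTop (α := ℕ))).sub h2n
  have e3 : Filter.Tendsto (fun n : ℕ => 1 - 3/(n:ℝ)) Filter.atTop (nhds 1) := by
    simpa using (tendsto_const_nhds (x := (1:ℝ)) (f := Filter.atTop (α := ℕ))).sub h3n
  have hqlim : Filter.Tendsto q Filter.atTop (nhds 1) := by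
    have h := (e1.mul e2).mul e3
    rw [hq]
    simpa using h
  have hUlim : Filter.Tendsto U Filter.atTop (nhds (12 * K^3)) := by
    have h := Filter.Tendsto.div (tendsto_const_nhds
      (x := (12 * K^3 : ℝ)) (f := Filter.atTop (α := ℕ))) hqlim one_ne_zero
    rw [hU]
    simpa [Pi.div_def] using h
  have hLolim : Filter.Tendsto Lo Filter.atTop (nhds (12 * K^3)) := by
    have h1 : Filter.Tendsto (fun n : ℕ => K - 1/(n:ℝ)) Filter.atTop (nhds K) := by
      simpa using (tendsto_const_nhds (x := K) (f := Filter.atTop (α := ℕ))).sub h1n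
    have h2 := (h1.pow 3).sub h3n
    have h3 : Filter.Tendsto (fun n : ℕ => 12 * ((K - 1/(n:ℝ))^3 - 3/(n:ℝ)))
        Filter.atTop (nhds (12 * K^3)) := by
      have := h2.const_mul (12:ℝ)
      simpa using this
    have h4 := h3.div hqlim one_ne_zero
    rw [hLo]
    simpa [Pi.div_def] using h4
  rw [show (12 * (((r : ℝ) - 1) / r) ^ 3) = 12 * K^3 by rw [hKr]]
  apply tendsto_of_tendsto_of_tendsto_of_le_of_le' hLolim hUlim
  · -- Lo n ≤ a n eventually
    rw [Filter.eventually_atTop]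
    refine ⟨4, fun n hn4 => ?_⟩
    have hnR : (4:ℝ) ≤ n := by exact_mod_cast hn4
    have hn0 : (0:ℝ) < n := by linarith
    set C : ℝ := (n:ℝ)*((n:ℝ)-1)*((n:ℝ)-2)*((n:ℝ)-3) with hC
    have hCpos : 0 < C := by
      rw [hC]
      have p1 : (0:ℝ) < (n:ℝ) - 1 := by linarith
      have p2 : (0:ℝ) < (n:ℝ) - 2 := by linarith
      have p3 : (0:ℝ) < (n:ℝ) - 3 := by linarith
      exact mul_pos (mul_pos (mul_pos hn0 p1) p2) p3
    have hch : ((n.choose 4 : ℕ) : ℝ) = C/24 := by rw [choose_four_cast n hn4, hC]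
    have hchpos : (0:ℝ) < ((n.choose 4 : ℕ) : ℝ) := by rw [hch]; positivity
    have hqC : q n = C / (n:ℝ)^4 := by
      rw [hq, hC]; field_simp
    have hqpos : 0 < q n := by
      rw [hqC]; positivity
    have hDge : 0 ≤ (n:ℝ) - (n:ℝ)/r - 1 := by
      have hr3 : (3:ℝ) ≤ r := by exact_mod_cast hr
      have : (n:ℝ)/r ≤ (n:ℝ)/3 :=
        div_le_div_of_nonneg_left (by linarith) (by norm_num) hr3
      linarith
    have hlow := genTuran_lower_real (n := n) hr1 hDge
    have hDeq : (n:ℝ) - (n:ℝ)/r - 1 = (n:ℝ) * (K - 1/(n:ℝ)) := by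
      rw [hK]; field_simp
    rw [hDeq] at hlow
    have hx : (n:ℝ)^4 * ((K - 1/(n:ℝ))^3 - 3/(n:ℝ))
        ≤ 2 * (genTuran n P3 (⊤ : SimpleGraph (Fin (r+1))) : ℝ) := by
      have he : (n:ℝ)^4 * ((K - 1/(n:ℝ))^3 - 3/(n:ℝ))
          = (n:ℝ) * ((n:ℝ) * (K - 1/(n:ℝ)))^3 - 3*(n:ℝ)^3 := by
        field_simp
      rw [he]
      exact hlow
    show Lo n ≤ _
    rw [hLo]
    simp only
    rw [div_le_div_iff₀ hqpos hchpos, hch, hqC]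
    rw [← mul_div_assoc, ← mul_div_assoc]
    rw [div_le_div_iff₀ (by norm_num : (0:ℝ) < 24) (by positivity : (0:ℝ) < (n:ℝ)^4)]
    nlinarith [mul_le_mul_of_nonneg_left hx (le_of_lt hCpos)]
  · -- a n ≤ U n eventually
    rw [Filter.eventually_atTop]
    refine ⟨4, fun n hn4 => ?_⟩
    have hnR : (4:ℝ) ≤ n := by exact_mod_cast hn4
    have hn0 : (0:ℝ) < n := by linarith
    set C : ℝ := (n:ℝ)*((n:ℝ)-1)*((n:ℝ)-2)*((n:ℝ)-3) with hC
    have hCpos : 0 < C := by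
      rw [hC]
      have p1 : (0:ℝ) < (n:ℝ) - 1 := by linarith
      have p2 : (0:ℝ) < (n:ℝ) - 2 := by linarith
      have p3 : (0:ℝ) < (n:ℝ) - 3 := by linarith
      exact mul_pos (mul_pos (mul_pos hn0 p1) p2) p3
    have hch : ((n.choose 4 : ℕ) : ℝ) = C/24 := by rw [choose_four_cast n hn4, hC]
    have hchpos : (0:ℝ) < ((n.choose 4 : ℕ) : ℝ) := by rw [hch]; positivity
    have hqC : q n = C / (n:ℝ)^4 := by
      rw [hq, hC]; field_simp
    have hqpos : 0 < q n := by
      rw [hqC]; positivity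
    have hup := genTuran_upper (n := n) hr1
    rw [show (1 - 1/(r:ℝ)) = K from hK.symm] at hup
    show _ ≤ U n
    rw [hU]
    simp only
    rw [div_le_div_iff₀ hchpos hqpos, hch, hqC]
    rw [← mul_div_assoc, ← mul_div_assoc]
    rw [div_le_div_iff₀ (by positivity : (0:ℝ) < (n:ℝ)^4) (by norm_num : (0:ℝ) < 24)]
    nlinarith [mul_le_mul_of_nonneg_right hup (le_of_lt hCpos)]
end Limit
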